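/- The starting Latin cube of order n=2t is a Latin cube: every symbol in {1,...,2t} appears exactly once in each row, each column, and each file. -/
import Mathlib


/-- The representative of `x` modulo `t` in `{1, ..., t}`. -/
def rmod (t : ℕ) (x : ℤ) : ℤ := (x - 1) % t + 1

/-- The starting Latin cube of order `2*t`. -/
def SLC (t : ℕ) (i j k : ℤ) : ℤ :=
  if (i ≤ t ∧ j ≤ t ∧ k ≤ t) ∨ ((t:ℤ) < i ∧ (t:ℤ) < k ∧ j ≤ t) then rmod t (j - i + k)
  else if ((t:ℤ) < i ∧ (t:ℤ) < j ∧ k ≤ t) ∨ ((t:ℤ) < j ∧ (t:ℤ) < k ∧ i ≤ t) then rmod t (i - j + k)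
  else if (i ≤ t ∧ k ≤ t ∧ (t:ℤ) < j) ∨ ((t:ℤ) < i ∧ (t:ℤ) < j ∧ (t:ℤ) < k) then rmod t (j - i + k) + t
  else rmod t (i - j + k) + t

lemma rmod_mem (t : ℕ) (ht : 1 ≤ t) (x : ℤ) : 1 ≤ rmod t x ∧ rmod t x ≤ t := by
  unfold rmod
  have h1 := Int.emod_nonneg (x - 1) (show ((t:ℤ)) ≠ 0 by exact_mod_cast (by omega : t ≠ 0))
  have h2 := Int.emod_lt_of_pos (x - 1) (show (0:ℤ) < t by exact_mod_cast ht)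
  omega

lemma rmod_congr (t : ℕ) {x y : ℤ} (h : x % (t:ℤ) = y % (t:ℤ)) : rmod t x = rmod t y := by
  have : (x - 1) % (t:ℤ) = (y - 1) % (t:ℤ) := Int.ModEq.sub_right 1 h
  simp [rmod, this]

lemma rmod_self (t : ℕ) {s : ℤ} (h1 : 1 ≤ s) (h2 : s ≤ t) : rmod t s = s := by
  unfold rmod
  rw [Int.emod_eq_of_lt (by omega) (by omega)]
  ring

lemma rmod_mod (t : ℕ) (x : ℤ) : rmod t x % (t:ℤ) = x % (t:ℤ) := by
  unfold rmod
  have h : ((x - 1) % (t:ℤ) + 1) % (t:ℤ) = (x - 1 + 1) % (t:ℤ) :=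
    Int.ModEq.add_right 1 (Int.emod_emod_of_dvd _ dvd_rfl)
  rw [show x - 1 + 1 = x from by ring] at h
  exact h

lemma rmod_shift_eq (t : ℕ) (ε c : ℤ) (hε : ε = 1 ∨ ε = -1) {j s : ℤ}
    (hj1 : 1 ≤ j) (hj2 : j ≤ (t:ℤ)) (hs1 : 1 ≤ s) (hs2 : s ≤ (t:ℤ)) :
    rmod t (ε * j + c) = s ↔ j = rmod t (ε * (s - c)) := by
  constructor
  · intro h
    have h1 : (ε * j + c) % (t:ℤ) = s % (t:ℤ) := by
      rw [← rmod_mod t (ε * j + c), h]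
    have h2 : (ε * (s - c)) % (t:ℤ) = j % (t:ℤ) := by
      have hm : Int.ModEq (t:ℤ) (ε * (s - c)) (ε * ((ε * j + c) - c)) :=
        Int.ModEq.mul_left ε (Int.ModEq.sub_right c (Int.ModEq.symm h1))
      have he : ε * ((ε * j + c) - c) = j := by rcases hε with rfl | rfl <;> ring
      rw [he] at hm
      exact hm
    calc j = rmod t j := (rmod_self t hj1 hj2).symm
      _ = rmod t (ε * (s - c)) := (rmod_congr t h2).symm
  · intro h
    have h1 : j % (t:ℤ) = (ε * (s - c)) % (t:ℤ) := by
      rw [h, rmod_mod]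
    have h2 : (ε * j + c) % (t:ℤ) = s % (t:ℤ) := by
      have hm : Int.ModEq (t:ℤ) (ε * j + c) (ε * (ε * (s - c)) + c) :=
        Int.ModEq.add_right c (Int.ModEq.mul_left ε h1)
      have he : ε * (ε * (s - c)) + c = s := by rcases hε with rfl | rfl <;> ring
      rw [he] at hm
      exact hm
    calc rmod t (ε * j + c) = rmod t s := rmod_congr t h2
      _ = s := rmod_self t hs1 hs2

lemma rmod_sub_t (t : ℕ) (ε c : ℤ) (j : ℤ) :
    rmod t (ε * j + c) = rmod t (ε * (j - t) + c) := by
  apply rmod_congr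
  exact Int.modEq_iff_dvd.mpr ⟨-ε, by ring⟩

/-- Generic lemma: low half maps to low symbols, high half to high symbols. -/
lemma exu_lowlow (t : ℕ) (ht : 1 ≤ t) (f : ℤ → ℤ) (ε₁ c₁ ε₂ c₂ : ℤ)
    (hε₁ : ε₁ = 1 ∨ ε₁ = -1) (hε₂ : ε₂ = 1 ∨ ε₂ = -1)
    (hlow : ∀ j, 1 ≤ j → j ≤ (t:ℤ) → f j = rmod t (ε₁ * j + c₁))
    (hhigh : ∀ j, (t:ℤ) < j → j ≤ 2 * t → f j = rmod t (ε₂ * j + c₂) + t)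
    (s : ℤ) (hs1 : 1 ≤ s) (hs2 : s ≤ 2 * (t:ℤ)) :
    ∃! j, j ∈ Finset.Icc (1:ℤ) (2 * t) ∧ f j = s := by
  have ht' : (1:ℤ) ≤ t := by exact_mod_cast ht
  by_cases hst : s ≤ (t:ℤ)
  · obtain ⟨hw1, hw2⟩ := rmod_mem t ht (ε₁ * (s - c₁))
    refine ⟨rmod t (ε₁ * (s - c₁)), ⟨Finset.mem_Icc.mpr ⟨by omega, by omega⟩, ?_⟩, ?_⟩
    · rw [hlow _ hw1 hw2]
      exact (rmod_shift_eq t ε₁ c₁ hε₁ hw1 hw2 hs1 hst).mpr rfl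
    · rintro y ⟨hy, hyf⟩
      rw [Finset.mem_Icc] at hy
      by_cases hyt : y ≤ (t:ℤ)
      · rw [hlow y hy.1 hyt] at hyf
        exact (rmod_shift_eq t ε₁ c₁ hε₁ hy.1 hyt hs1 hst).mp hyf
      · rw [hhigh y (by omega) hy.2] at hyf
        have := (rmod_mem t ht (ε₂ * y + c₂)).1
        omega
  · have hs1' : 1 ≤ s - t := by omega
    have hs2' : s - (t:ℤ) ≤ t := by omega
    obtain ⟨hw1, hw2⟩ := rmod_mem t ht (ε₂ * ((s - t) - c₂))
    refine ⟨rmod t (ε₂ * ((s - t) - c₂)) + t, ⟨Finset.mem_Icc.mpr ⟨by omega, by omega⟩, ?_⟩, ?_⟩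
    · rw [hhigh _ (by omega) (by omega), rmod_sub_t t ε₂ c₂,
        show rmod t (ε₂ * ((s - t) - c₂)) + (t:ℤ) - t = rmod t (ε₂ * ((s - t) - c₂)) from by ring]
      have := (rmod_shift_eq t ε₂ c₂ hε₂ hw1 hw2 hs1' hs2').mpr rfl
      omega
    · rintro y ⟨hy, hyf⟩
      rw [Finset.mem_Icc] at hy
      by_cases hyt : y ≤ (t:ℤ)
      · rw [hlow y hy.1 hyt] at hyf
        have := (rmod_mem t ht (ε₁ * y + c₁)).2
        omega
      · rw [hhigh y (by omega) hy.2, rmod_sub_t t ε₂ c₂] at hyf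
        have hy1 : 1 ≤ y - t := by omega
        have hy2 : y - (t:ℤ) ≤ t := by omega
        have hyf' : rmod t (ε₂ * (y - t) + c₂) = s - t := by omega
        have := (rmod_shift_eq t ε₂ c₂ hε₂ hy1 hy2 hs1' hs2').mp hyf'
        omega

/-- Generic lemma: low half maps to high symbols, high half to low symbols. -/
lemma exu_lowhigh (t : ℕ) (ht : 1 ≤ t) (f : ℤ → ℤ) (ε₁ c₁ ε₂ c₂ : ℤ)
    (hε₁ : ε₁ = 1 ∨ ε₁ = -1) (hε₂ : ε₂ = 1 ∨ ε₂ = -1)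
    (hlow : ∀ j, 1 ≤ j → j ≤ (t:ℤ) → f j = rmod t (ε₁ * j + c₁) + t)
    (hhigh : ∀ j, (t:ℤ) < j → j ≤ 2 * t → f j = rmod t (ε₂ * j + c₂))
    (s : ℤ) (hs1 : 1 ≤ s) (hs2 : s ≤ 2 * (t:ℤ)) :
    ∃! j, j ∈ Finset.Icc (1:ℤ) (2 * t) ∧ f j = s := by
  have ht' : (1:ℤ) ≤ t := by exact_mod_cast ht
  by_cases hst : s ≤ (t:ℤ)
  · obtain ⟨hw1, hw2⟩ := rmod_mem t ht (ε₂ * (s - c₂))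
    refine ⟨rmod t (ε₂ * (s - c₂)) + t, ⟨Finset.mem_Icc.mpr ⟨by omega, by omega⟩, ?_⟩, ?_⟩
    · rw [hhigh _ (by omega) (by omega), rmod_sub_t t ε₂ c₂,
        show rmod t (ε₂ * (s - c₂)) + (t:ℤ) - t = rmod t (ε₂ * (s - c₂)) from by ring]
      exact (rmod_shift_eq t ε₂ c₂ hε₂ hw1 hw2 hs1 hst).mpr rfl
    · rintro y ⟨hy, hyf⟩
      rw [Finset.mem_Icc] at hy
      by_cases hyt : y ≤ (t:ℤ)
      · rw [hlow y hy.1 hyt] at hyf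
        have := (rmod_mem t ht (ε₁ * y + c₁)).1
        omega
      · rw [hhigh y (by omega) hy.2, rmod_sub_t t ε₂ c₂] at hyf
        have hy1 : 1 ≤ y - t := by omega
        have hy2 : y - (t:ℤ) ≤ t := by omega
        have := (rmod_shift_eq t ε₂ c₂ hε₂ hy1 hy2 hs1 hst).mp hyf
        omega
  · have hs1' : 1 ≤ s - t := by omega
    have hs2' : s - (t:ℤ) ≤ t := by omega
    obtain ⟨hw1, hw2⟩ := rmod_mem t ht (ε₁ * ((s - t) - c₁))
    refine ⟨rmod t (ε₁ * ((s - t) - c₁)), ⟨Finset.mem_Icc.mpr ⟨by omega, by omega⟩, ?_⟩, ?_⟩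
    · rw [hlow _ hw1 hw2]
      have := (rmod_shift_eq t ε₁ c₁ hε₁ hw1 hw2 hs1' hs2').mpr rfl
      omega
    · rintro y ⟨hy, hyf⟩
      rw [Finset.mem_Icc] at hy
      by_cases hyt : y ≤ (t:ℤ)
      · rw [hlow y hy.1 hyt] at hyf
        have hyf' : rmod t (ε₁ * y + c₁) = s - t := by omega
        exact (rmod_shift_eq t ε₁ c₁ hε₁ hy.1 hyt hs1' hs2').mp hyf'
      · rw [hhigh y (by omega) hy.2] at hyf
        have := (rmod_mem t ht (ε₂ * y + c₂)).2
        omega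

section evalSLC
variable (t : ℕ) {i j k : ℤ}

lemma SLC_LLL (hi : i ≤ t) (hj : j ≤ t) (hk : k ≤ t) :
    SLC t i j k = rmod t (j - i + k) := by
  unfold SLC; rw [if_pos (Or.inl ⟨hi, hj, hk⟩)]

lemma SLC_HLH (hi : (t:ℤ) < i) (hj : j ≤ t) (hk : (t:ℤ) < k) :
    SLC t i j k = rmod t (j - i + k) := by
  unfold SLC; rw [if_pos (Or.inr ⟨hi, hk, hj⟩)]

lemma SLC_HHL (hi : (t:ℤ) < i) (hj : (t:ℤ) < j) (hk : k ≤ t) :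
    SLC t i j k = rmod t (i - j + k) := by
  unfold SLC; rw [if_neg (by omega), if_pos (Or.inl ⟨hi, hj, hk⟩)]

lemma SLC_LHH (hi : i ≤ t) (hj : (t:ℤ) < j) (hk : (t:ℤ) < k) :
    SLC t i j k = rmod t (i - j + k) := by
  unfold SLC; rw [if_neg (by omega), if_pos (Or.inr ⟨hj, hk, hi⟩)]

lemma SLC_LHL (hi : i ≤ t) (hj : (t:ℤ) < j) (hk : k ≤ t) :
    SLC t i j k = rmod t (j - i + k) + t := by
  unfold SLC; rw [if_neg (by omega), if_neg (by omega), if_pos (Or.inl ⟨hi, hk, hj⟩)]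

lemma SLC_HHH (hi : (t:ℤ) < i) (hj : (t:ℤ) < j) (hk : (t:ℤ) < k) :
    SLC t i j k = rmod t (j - i + k) + t := by
  unfold SLC; rw [if_neg (by omega), if_neg (by omega), if_pos (Or.inr ⟨hi, hj, hk⟩)]

lemma SLC_HLL (hi : (t:ℤ) < i) (hj : j ≤ t) (hk : k ≤ t) :
    SLC t i j k = rmod t (i - j + k) + t := by
  unfold SLC; rw [if_neg (by omega), if_neg (by omega), if_neg (by omega)]

lemma SLC_LLH (hi : i ≤ t) (hj : j ≤ t) (hk : (t:ℤ) < k) :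
    SLC t i j k = rmod t (i - j + k) + t := by
  unfold SLC; rw [if_neg (by omega), if_neg (by omega), if_neg (by omega)]

end evalSLC

/-- The starting Latin cube of order `n = 2t` is a Latin cube: every symbol in
`{1,...,2t}` appears exactly once in each row, each column, and each file. -/
theorem starting_latin_cube_is_latin (t : ℕ) (ht : 1 ≤ t) :
    (∀ i ∈ Finset.Icc (1:ℤ) (2*t), ∀ k ∈ Finset.Icc (1:ℤ) (2*t),
      ∀ s ∈ Finset.Icc (1:ℤ) (2*t),
      ∃! j, j ∈ Finset.Icc (1:ℤ) (2*t) ∧ SLC t i j k = s) ∧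
    (∀ j ∈ Finset.Icc (1:ℤ) (2*t), ∀ k ∈ Finset.Icc (1:ℤ) (2*t),
      ∀ s ∈ Finset.Icc (1:ℤ) (2*t),
      ∃! i, i ∈ Finset.Icc (1:ℤ) (2*t) ∧ SLC t i j k = s) ∧
    (∀ i ∈ Finset.Icc (1:ℤ) (2*t), ∀ j ∈ Finset.Icc (1:ℤ) (2*t),
      ∀ s ∈ Finset.Icc (1:ℤ) (2*t),
      ∃! k, k ∈ Finset.Icc (1:ℤ) (2*t) ∧ SLC t i j k = s) := by
  refine ⟨?_, ?_, ?_⟩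
  · -- rows: fix i, k, vary j
    intro i hi k hk s hs
    rw [Finset.mem_Icc] at hi hk hs
    rcases le_or_gt i (t:ℤ) with hit | hit <;> rcases le_or_gt k (t:ℤ) with hkt | hkt
    · exact exu_lowlow t ht (fun j => SLC t i j k) 1 (k - i) 1 (k - i)
        (Or.inl rfl) (Or.inl rfl)
        (fun j h1 h2 => by show SLC t i j k = _; rw [SLC_LLL t hit h2 hkt, show j - i + k = 1 * j + (k - i) from by ring])
        (fun j h1 h2 => by show SLC t i j k = _; rw [SLC_LHL t hit h1 hkt, show j - i + k = 1 * j + (k - i) from by ring])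
        s hs.1 hs.2
    · exact exu_lowhigh t ht (fun j => SLC t i j k) (-1) (i + k) (-1) (i + k)
        (Or.inr rfl) (Or.inr rfl)
        (fun j h1 h2 => by show SLC t i j k = _; rw [SLC_LLH t hit h2 hkt, show i - j + k = -1 * j + (i + k) from by ring])
        (fun j h1 h2 => by show SLC t i j k = _; rw [SLC_LHH t hit h1 hkt, show i - j + k = -1 * j + (i + k) from by ring])
        s hs.1 hs.2
    · exact exu_lowhigh t ht (fun j => SLC t i j k) (-1) (i + k) (-1) (i + k)
        (Or.inr rfl) (Or.inr rfl)
        (fun j h1 h2 => by show SLC t i j k = _; rw [SLC_HLL t hit h2 hkt, show i - j + k = -1 * j + (i + k) from by ring])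
        (fun j h1 h2 => by show SLC t i j k = _; rw [SLC_HHL t hit h1 hkt, show i - j + k = -1 * j + (i + k) from by ring])
        s hs.1 hs.2
    · exact exu_lowlow t ht (fun j => SLC t i j k) 1 (k - i) 1 (k - i)
        (Or.inl rfl) (Or.inl rfl)
        (fun j h1 h2 => by show SLC t i j k = _; rw [SLC_HLH t hit h2 hkt, show j - i + k = 1 * j + (k - i) from by ring])
        (fun j h1 h2 => by show SLC t i j k = _; rw [SLC_HHH t hit h1 hkt, show j - i + k = 1 * j + (k - i) from by ring])
        s hs.1 hs.2
  · -- columns: fix j, k, vary i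
    intro j hj k hk s hs
    rw [Finset.mem_Icc] at hj hk hs
    rcases le_or_gt j (t:ℤ) with hjt | hjt <;> rcases le_or_gt k (t:ℤ) with hkt | hkt
    · exact exu_lowlow t ht (fun i => SLC t i j k) (-1) (j + k) 1 (k - j)
        (Or.inr rfl) (Or.inl rfl)
        (fun i h1 h2 => by show SLC t i j k = _; rw [SLC_LLL t h2 hjt hkt, show j - i + k = -1 * i + (j + k) from by ring])
        (fun i h1 h2 => by show SLC t i j k = _; rw [SLC_HLL t h1 hjt hkt, show i - j + k = 1 * i + (k - j) from by ring])
        s hs.1 hs.2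
    · exact exu_lowhigh t ht (fun i => SLC t i j k) 1 (k - j) (-1) (j + k)
        (Or.inl rfl) (Or.inr rfl)
        (fun i h1 h2 => by show SLC t i j k = _; rw [SLC_LLH t h2 hjt hkt, show i - j + k = 1 * i + (k - j) from by ring])
        (fun i h1 h2 => by show SLC t i j k = _; rw [SLC_HLH t h1 hjt hkt, show j - i + k = -1 * i + (j + k) from by ring])
        s hs.1 hs.2
    · exact exu_lowhigh t ht (fun i => SLC t i j k) (-1) (j + k) 1 (k - j)
        (Or.inr rfl) (Or.inl rfl)
        (fun i h1 h2 => by show SLC t i j k = _; rw [SLC_LHL t h2 hjt hkt, show j - i + k = -1 * i + (j + k) from by ring])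
        (fun i h1 h2 => by show SLC t i j k = _; rw [SLC_HHL t h1 hjt hkt, show i - j + k = 1 * i + (k - j) from by ring])
        s hs.1 hs.2
    · exact exu_lowlow t ht (fun i => SLC t i j k) 1 (k - j) (-1) (j + k)
        (Or.inl rfl) (Or.inr rfl)
        (fun i h1 h2 => by show SLC t i j k = _; rw [SLC_LHH t h2 hjt hkt, show i - j + k = 1 * i + (k - j) from by ring])
        (fun i h1 h2 => by show SLC t i j k = _; rw [SLC_HHH t h1 hjt hkt, show j - i + k = -1 * i + (j + k) from by ring])
        s hs.1 hs.2
  · -- files: fix i, j, vary k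
    intro i hi j hj s hs
    rw [Finset.mem_Icc] at hi hj hs
    rcases le_or_gt i (t:ℤ) with hit | hit <;> rcases le_or_gt j (t:ℤ) with hjt | hjt
    · exact exu_lowlow t ht (fun k => SLC t i j k) 1 (j - i) 1 (i - j)
        (Or.inl rfl) (Or.inl rfl)
        (fun k h1 h2 => by show SLC t i j k = _; rw [SLC_LLL t hit hjt h2, show j - i + k = 1 * k + (j - i) from by ring])
        (fun k h1 h2 => by show SLC t i j k = _; rw [SLC_LLH t hit hjt h1, show i - j + k = 1 * k + (i - j) from by ring])
        s hs.1 hs.2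
    · exact exu_lowhigh t ht (fun k => SLC t i j k) 1 (j - i) 1 (i - j)
        (Or.inl rfl) (Or.inl rfl)
        (fun k h1 h2 => by show SLC t i j k = _; rw [SLC_LHL t hit hjt h2, show j - i + k = 1 * k + (j - i) from by ring])
        (fun k h1 h2 => by show SLC t i j k = _; rw [SLC_LHH t hit hjt h1, show i - j + k = 1 * k + (i - j) from by ring])
        s hs.1 hs.2
    · exact exu_lowhigh t ht (fun k => SLC t i j k) 1 (i - j) 1 (j - i)
        (Or.inl rfl) (Or.inl rfl)
        (fun k h1 h2 => by show SLC t i j k = _; rw [SLC_HLL t hit hjt h2, show i - j + k = 1 * k + (i - j) from by ring])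
        (fun k h1 h2 => by show SLC t i j k = _; rw [SLC_HLH t hit hjt h1, show j - i + k = 1 * k + (j - i) from by ring])
        s hs.1 hs.2
    · exact exu_lowlow t ht (fun k => SLC t i j k) 1 (i - j) 1 (j - i)
        (Or.inl rfl) (Or.inl rfl)
        (fun k h1 h2 => by show SLC t i j k = _; rw [SLC_HHL t hit hjt h2, show i - j + k = 1 * k + (i - j) from by ring])
        (fun k h1 h2 => by show SLC t i j k = _; rw [SLC_HHH t hit hjt h1, show j - i + k = 1 * k + (j - i) from by ring])
        s hs.1 hs.2
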